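/- arXiv:1201.1626 — 9 statements merged into one kernel-verified Lean document; each statement's English description precedes it below -/
import Mathlib

section
/- Let β, G be positive C² functions on [p₀,0] satisfying 2βGG'' − β(G')² + β'GG' − 2β''G² − 4k²G² + 4z = 0 for a constant z. Then the substitution M(p) = √(G(p)/β(p))·Ψ(p) transforms the equation βM'' + (3/2)β'M' = k²M into 2βG²Ψ'' + (2βGG' + β'G²)Ψ' − 2zΨ = 0; that is, M solves the former iff Ψ solves the latter. -/
/-- Under the constraint `2βGG'' − β(G')² + β'GG' − 2β''G² − 4k²G² + 4z = 0`, the substitution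
`M = √(G/β)·Ψ` transforms `βM'' + (3/2)β'M' = k²M` into `2βG²Ψ'' + (2βGG' + β'G²)Ψ' − 2zΨ = 0`. -/
theorem stmt_3 (p₀ k z : ℝ) (hp₀ : p₀ < 0) (hk : 0 < k) (β G : ℝ → ℝ)
    (hβ : ContDiff ℝ 2 β) (hG : ContDiff ℝ 2 G)
    (hβpos : ∀ p ∈ Set.Icc p₀ 0, 0 < β p)
    (hGpos : ∀ p ∈ Set.Icc p₀ 0, 0 < G p)
    (hconstraint : ∀ p ∈ Set.Icc p₀ 0,
      2 * β p * G p * deriv (deriv G) p - β p * (deriv G p) ^ 2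
        + deriv β p * G p * deriv G p - 2 * deriv (deriv β) p * (G p) ^ 2
        - 4 * k ^ 2 * (G p) ^ 2 + 4 * z = 0)
    (M Ψ : ℝ → ℝ)
    (hM2 : Differentiable ℝ M) (hM2' : Differentiable ℝ (deriv M))
    (hΨ2 : Differentiable ℝ Ψ) (hΨ2' : Differentiable ℝ (deriv Ψ))
    (hM : ∀ p, M p = Real.sqrt (G p / β p) * Ψ p) :
    ∀ p ∈ Set.Icc p₀ 0,
      (β p * deriv (deriv M) p + 3 / 2 * deriv β p * deriv M p = k ^ 2 * M p)
        ↔ 2 * β p * (G p) ^ 2 * deriv (deriv Ψ) p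
            + (2 * β p * G p * deriv G p + deriv β p * (G p) ^ 2) * deriv Ψ p
            - 2 * z * Ψ p = 0 := by
  have hβd : Differentiable ℝ β := hβ.differentiable (by norm_num)
  have hGd : Differentiable ℝ G := hG.differentiable (by norm_num)
  have hβd' : Differentiable ℝ (deriv β) := by
    have h : ContDiff ℝ ((1:ℕ∞)+1) β := by exact_mod_cast hβ
    exact ((contDiff_succ_iff_deriv.mp h).2.2).differentiable (by norm_num)
  have hGd' : Differentiable ℝ (deriv G) := by
    have h : ContDiff ℝ ((1:ℕ∞)+1) G := by exact_mod_cast hG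
    exact ((contDiff_succ_iff_deriv.mp h).2.2).differentiable (by norm_num)
  have hMfun : M = fun q => Real.sqrt (G q / β q) * Ψ q := funext hM
  intro p hp
  have hb : 0 < β p := hβpos p hp
  have hg : 0 < G p := hGpos p hp
  have hbU : ∀ᶠ q in nhds p, 0 < β q :=
    hβd.continuous.continuousAt.eventually (eventually_gt_nhds hb)
  have hgU : ∀ᶠ q in nhds p, 0 < G q :=
    hGd.continuous.continuousAt.eventually (eventually_gt_nhds hg)
  -- first derivative of M, eventually near p
  have hMder : ∀ᶠ q in nhds p, HasDerivAt M
      ((deriv G q * β q - G q * deriv β q) / (β q) ^ 2 / (2 * Real.sqrt (G q / β q)) * Ψ q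
        + Real.sqrt (G q / β q) * deriv Ψ q) q := by
    filter_upwards [hbU, hgU] with q hbq hgq
    have hu : HasDerivAt (fun x => G x / β x)
        ((deriv G q * β q - G q * deriv β q) / (β q) ^ 2) q :=
      (hGd q).hasDerivAt.div (hβd q).hasDerivAt hbq.ne'
    have hroot : HasDerivAt (fun x => Real.sqrt (G x / β x))
        ((deriv G q * β q - G q * deriv β q) / (β q) ^ 2 / (2 * Real.sqrt (G q / β q))) q := by
      have := (Real.hasDerivAt_sqrt (div_pos hgq hbq).ne').comp q hu
      exact this.congr_deriv (by ring)
    rw [hMfun]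
    exact hroot.mul (hΨ2 q).hasDerivAt
  have hM1 : deriv M p
      = (deriv G p * β p - G p * deriv β p) / (β p) ^ 2 / (2 * Real.sqrt (G p / β p)) * Ψ p
        + Real.sqrt (G p / β p) * deriv Ψ p := hMder.self_of_nhds.deriv
  have hdereq : deriv M =ᶠ[nhds p] fun q =>
      (deriv G q * β q - G q * deriv β q) / (β q) ^ 2 / (2 * Real.sqrt (G q / β q)) * Ψ q
        + Real.sqrt (G q / β q) * deriv Ψ q :=
    hMder.mono fun q hq => hq.deriv
  -- second derivative of M at p
  have hu : HasDerivAt (fun x => G x / β x)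
      ((deriv G p * β p - G p * deriv β p) / (β p) ^ 2) p :=
    (hGd p).hasDerivAt.div (hβd p).hasDerivAt hb.ne'
  have hs0 : 0 < Real.sqrt (G p / β p) := Real.sqrt_pos.mpr (div_pos hg hb)
  have hroot : HasDerivAt (fun x => Real.sqrt (G x / β x))
      ((deriv G p * β p - G p * deriv β p) / (β p) ^ 2 / (2 * Real.sqrt (G p / β p))) p := by
    have := (Real.hasDerivAt_sqrt (div_pos hg hb).ne').comp p hu
    exact this.congr_deriv (by ring)
  have hN : HasDerivAt (fun q => deriv G q * β q - G q * deriv β q)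
      ((deriv (deriv G) p * β p + deriv G p * deriv β p)
        - (deriv G p * deriv β p + G p * deriv (deriv β) p)) p :=
    ((hGd' p).hasDerivAt.mul (hβd p).hasDerivAt).sub
      ((hGd p).hasDerivAt.mul (hβd' p).hasDerivAt)
  have hDen : HasDerivAt (fun q => (β q) ^ 2) ((2:ℕ) * β p ^ 1 * deriv β p) p :=
    (hβd p).hasDerivAt.pow 2
  have hQ : HasDerivAt (fun q => (deriv G q * β q - G q * deriv β q) / (β q) ^ 2)
      ((((deriv (deriv G) p * β p + deriv G p * deriv β p)
        - (deriv G p * deriv β p + G p * deriv (deriv β) p)) * (β p) ^ 2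
        - (deriv G p * β p - G p * deriv β p) * ((2:ℕ) * β p ^ 1 * deriv β p))
        / ((β p) ^ 2) ^ 2) p :=
    hN.div hDen (pow_ne_zero _ hb.ne')
  have h2S : HasDerivAt (fun q => 2 * Real.sqrt (G q / β q))
      (2 * ((deriv G p * β p - G p * deriv β p) / (β p) ^ 2 / (2 * Real.sqrt (G p / β p)))) p :=
    hroot.const_mul 2
  have hA : HasDerivAt
      (fun q => (deriv G q * β q - G q * deriv β q) / (β q) ^ 2 / (2 * Real.sqrt (G q / β q)))
      (((((deriv (deriv G) p * β p + deriv G p * deriv β p)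
        - (deriv G p * deriv β p + G p * deriv (deriv β) p)) * (β p) ^ 2
        - (deriv G p * β p - G p * deriv β p) * ((2:ℕ) * β p ^ 1 * deriv β p))
        / ((β p) ^ 2) ^ 2 * (2 * Real.sqrt (G p / β p))
        - (deriv G p * β p - G p * deriv β p) / (β p) ^ 2
          * (2 * ((deriv G p * β p - G p * deriv β p) / (β p) ^ 2
              / (2 * Real.sqrt (G p / β p)))))
        / (2 * Real.sqrt (G p / β p)) ^ 2) p :=
    hQ.div h2S (by positivity)
  have hD := (hA.mul (hΨ2 p).hasDerivAt).add (hroot.mul (hΨ2' p).hasDerivAt)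
  have hM2e := hdereq.deriv_eq.trans hD.deriv
  rw [hM p, hM1, hM2e]
  have hss : Real.sqrt (G p / β p) ^ 2 = G p / β p := Real.sq_sqrt (div_pos hg hb).le
  set s := Real.sqrt (G p / β p) with hs_def
  have hgeq : G p = s ^ 2 * β p := by rw [hss]; field_simp
  have hc := hconstraint p hp
  rw [hgeq] at hc
  have hz : z = -(2 * β p * (s^2*β p) * deriv (deriv G) p - β p * (deriv G p)^2
      + deriv β p * (s^2*β p) * deriv G p - 2 * deriv (deriv β) p * (s^2*β p)^2
      - 4*k^2*(s^2*β p)^2) / 4 := by linarith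
  rw [hgeq]
  have hsne : s ≠ 0 := (Real.sqrt_pos.mpr (div_pos hg hb)).ne'
  have hC : 2 * β p * (s ^ 2 * β p) ^ 2 * deriv (deriv Ψ) p +
        (2 * β p * (s ^ 2 * β p) * deriv G p + deriv β p * (s ^ 2 * β p) ^ 2) * deriv Ψ p -
        2 * z * Ψ p
      = 2 * (s ^ 2 * β p) ^ 2 / s *
        ((β p *
          ((((deriv (deriv G) p * β p + deriv G p * deriv β p -
                (deriv G p * deriv β p + s ^ 2 * β p * deriv (deriv β) p)) * β p ^ 2 -
              (deriv G p * β p - s ^ 2 * β p * deriv β p) * ((2:ℕ) * β p ^ 1 * deriv β p)) /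
                (β p ^ 2) ^ 2 * (2 * s) -
              (deriv G p * β p - s ^ 2 * β p * deriv β p) / β p ^ 2 *
                (2 * ((deriv G p * β p - s ^ 2 * β p * deriv β p) / β p ^ 2 / (2 * s)))) /
                  (2 * s) ^ 2 * Ψ p +
            (deriv G p * β p - s ^ 2 * β p * deriv β p) / β p ^ 2 / (2 * s) * deriv Ψ p +
            ((deriv G p * β p - s ^ 2 * β p * deriv β p) / β p ^ 2 / (2 * s) * deriv Ψ p
              + s * deriv (deriv Ψ) p)) +
          3 / 2 * deriv β p *
            ((deriv G p * β p - s ^ 2 * β p * deriv β p) / β p ^ 2 / (2 * s) * Ψ p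
              + s * deriv Ψ p))
          - k ^ 2 * (s * Ψ p)) := by
    rw [hz]
    field_simp
    ring
  constructor
  · intro h
    rw [hC, h, sub_self, mul_zero]
  · intro h
    rw [hC] at h
    rcases mul_eq_zero.mp h with h' | h'
    · exact absurd h' (by positivity)
    · linarith
end

section
/- Let β, G be positive C² functions on [p₀,0] satisfying the constraint 2βGG'' − β(G')² + β'GG' − 2β''G² − 4k²G² + 4z = 0 with z > 0. Then the function M(p) = √(G(p)/β(p))·sinh(∫_{p₀}^p √z/(G(s)√(β(s))) ds) satisfies βM'' + (3/2)β'M' = k²M on [p₀,0] and M(p₀) = 0. -/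
set_option maxHeartbeats 2000000

/-- For `z > 0`, the function `M(p) = √(G(p)/β(p))·sinh(∫_{p₀}^p √z/(G√β))`
solves `βM'' + (3/2)β'M' = k²M` on `[p₀,0]` with `M(p₀) = 0`. -/
theorem stmt_4 (p₀ k z : ℝ) (hp₀ : p₀ < 0) (hk : 0 < k) (hz : 0 < z) (β G : ℝ → ℝ)
    (hβ : ContDiff ℝ 2 β) (hG : ContDiff ℝ 2 G)
    (hβpos : ∀ p ∈ Set.Icc p₀ 0, 0 < β p)
    (hGpos : ∀ p ∈ Set.Icc p₀ 0, 0 < G p)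
    (hconstraint : ∀ p ∈ Set.Icc p₀ 0,
      2 * β p * G p * deriv (deriv G) p - β p * (deriv G p) ^ 2
        + deriv β p * G p * deriv G p - 2 * deriv (deriv β) p * (G p) ^ 2
        - 4 * k ^ 2 * (G p) ^ 2 + 4 * z = 0)
    (M : ℝ → ℝ)
    (hM : ∀ p, M p = Real.sqrt (G p / β p) *
        Real.sinh (∫ s in p₀..p, Real.sqrt z / (G s * Real.sqrt (β s)))) :
    (∀ p ∈ Set.Icc p₀ 0,
        β p * deriv (deriv M) p + 3 / 2 * deriv β p * deriv M p = k ^ 2 * M p)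
      ∧ M p₀ = 0 := by
  constructor
  · -- the ODE
    -- Step 0: an open interval V ⊇ Icc p₀ 0 on which β, G are positive
    have hU : IsOpen {x : ℝ | 0 < β x ∧ 0 < G x} :=
      (isOpen_lt continuous_const hβ.continuous).inter (isOpen_lt continuous_const hG.continuous)
    have hKU : Set.Icc p₀ 0 ⊆ {x : ℝ | 0 < β x ∧ 0 < G x} :=
      fun x hx => ⟨hβpos x hx, hGpos x hx⟩
    obtain ⟨δ, hδ, hsub⟩ := (isCompact_Icc (a := p₀) (b := 0)).exists_cthickening_subset_open hU hKU
    set V : Set ℝ := Set.Ioo (p₀ - δ) δ with hVdef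
    have hVo : IsOpen V := isOpen_Ioo
    have hIccV : Set.Icc p₀ 0 ⊆ V := by
      intro x hx
      exact ⟨by linarith [hx.1], by linarith [hx.2]⟩
    have hVpos : ∀ x ∈ V, 0 < β x ∧ 0 < G x := by
      intro x hx
      refine hsub ?_
      rcases le_total x p₀ with h | h
      · exact Metric.mem_cthickening_of_dist_le x p₀ δ _ (Set.mem_Icc.mpr ⟨le_refl p₀, hp₀.le⟩)
          (by rw [Real.dist_eq, abs_le]; constructor <;> [linarith [hx.1]; linarith])
      rcases le_total x 0 with h0 | h0
      · exact Metric.mem_cthickening_of_dist_le x x δ _ (Set.mem_Icc.mpr ⟨h, h0⟩)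
          (by simp [hδ.le])
      · exact Metric.mem_cthickening_of_dist_le x 0 δ _ (Set.mem_Icc.mpr ⟨hp₀.le, le_refl 0⟩)
          (by rw [Real.dist_eq, abs_le]; constructor <;> [linarith; linarith [hx.2]])
    have hp₀V : p₀ ∈ V := hIccV (Set.mem_Icc.mpr ⟨le_refl p₀, hp₀.le⟩)
    -- differentiability facts
    have hβdiff : Differentiable ℝ β := hβ.differentiable two_ne_zero
    have hGdiff : Differentiable ℝ G := hG.differentiable two_ne_zero
    have hβ2 : ContDiff ℝ (1 + 1 : ℕ) β := by exact_mod_cast hβ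
    have hG2' : ContDiff ℝ (1 + 1 : ℕ) G := by exact_mod_cast hG
    have hβ'diff : Differentiable ℝ (deriv β) :=
      (contDiff_succ_iff_deriv.mp hβ2).2.2.differentiable one_ne_zero
    have hG'diff : Differentiable ℝ (deriv G) :=
      (contDiff_succ_iff_deriv.mp hG2').2.2.differentiable one_ne_zero
    have hb1 : ∀ q : ℝ, HasDerivAt β (deriv β q) q := fun q => (hβdiff q).hasDerivAt
    have hg1 : ∀ q : ℝ, HasDerivAt G (deriv G q) q := fun q => (hGdiff q).hasDerivAt
    have hb2 : ∀ q : ℝ, HasDerivAt (deriv β) (deriv (deriv β) q) q :=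
      fun q => (hβ'diff q).hasDerivAt
    have hg2 : ∀ q : ℝ, HasDerivAt (deriv G) (deriv (deriv G) q) q :=
      fun q => (hG'diff q).hasDerivAt
    have hsb : ∀ q ∈ V, HasDerivAt (fun x => Real.sqrt (β x))
        (deriv β q / (2 * Real.sqrt (β q))) q := by
      intro q hq
      have h2 := (Real.hasDerivAt_sqrt (ne_of_gt (hVpos q hq).1)).comp q (hb1 q)
      exact h2.congr_deriv (by ring)
    have hsg : ∀ q ∈ V, HasDerivAt (fun x => Real.sqrt (G x))
        (deriv G q / (2 * Real.sqrt (G q))) q := by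
      intro q hq
      have h2 := (Real.hasDerivAt_sqrt (ne_of_gt (hVpos q hq).2)).comp q (hg1 q)
      exact h2.congr_deriv (by ring)
    -- FTC for the phase integral
    have hfC : ContinuousOn (fun s => Real.sqrt z / (G s * Real.sqrt (β s))) V :=
      ContinuousOn.div continuousOn_const
        ((hG.continuous.continuousOn).mul
          ((Real.continuous_sqrt.comp hβ.continuous).continuousOn))
        (fun x hx => ne_of_gt (mul_pos (hVpos x hx).2 (Real.sqrt_pos.mpr (hVpos x hx).1)))
    have hφ : ∀ q ∈ V, HasDerivAt (fun x => ∫ s in p₀..x, Real.sqrt z / (G s * Real.sqrt (β s)))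
        (Real.sqrt z / (G q * Real.sqrt (β q))) q := by
      intro q hq
      exact intervalIntegral.integral_hasDerivAt_right
        ((hfC.mono (Set.ordConnected_Ioo.uIcc_subset hp₀V hq)).intervalIntegrable)
        (hfC.stronglyMeasurableAtFilter hVo q hq)
        (hfC.continuousAt (hVo.mem_nhds hq))
    -- first derivative of M on V
    have key : ∀ q ∈ V, HasDerivAt M
        ((deriv G q / (2 * Real.sqrt (G q)) * Real.sqrt (β q)
            - Real.sqrt (G q) * (deriv β q / (2 * Real.sqrt (β q)))) / Real.sqrt (β q) ^ 2
          * Real.sinh (∫ s in p₀..q, Real.sqrt z / (G s * Real.sqrt (β s)))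
          + Real.sqrt (G q) / Real.sqrt (β q) *
            (Real.cosh (∫ s in p₀..q, Real.sqrt z / (G s * Real.sqrt (β s)))
              * (Real.sqrt z / (G q * Real.sqrt (β q))))) q := by
      intro q hq
      have hA := (hsg q hq).div (hsb q hq) (ne_of_gt (Real.sqrt_pos.mpr (hVpos q hq).1))
      have h := hA.mul ((hφ q hq).sinh)
      refine h.congr_of_eventuallyEq ?_
      filter_upwards [hVo.mem_nhds hq] with x hx
      rw [hM x, Real.sqrt_div (hVpos x hx).2.le]
      rfl
    intro p hp
    have hp' : p ∈ V := hIccV hp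
    have hbp : 0 < β p := (hVpos p hp').1
    have hgp : 0 < G p := (hVpos p hp').2
    have hsbne : Real.sqrt (β p) ≠ 0 := ne_of_gt (Real.sqrt_pos.mpr hbp)
    have hsgne : Real.sqrt (G p) ≠ 0 := ne_of_gt (Real.sqrt_pos.mpr hgp)
    -- second derivative at p
    have hAp := (hsg p hp').div (hsb p hp') hsbne
    have hsinh := (hφ p hp').sinh
    have hcosh := (hφ p hp').cosh
    have hfd := (hasDerivAt_const p (Real.sqrt z)).div ((hg1 p).mul (hsb p hp'))
      (ne_of_gt (mul_pos hgp (Real.sqrt_pos.mpr hbp)))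
    have hq1 := (hg2 p).div ((hsg p hp').const_mul 2)
      (by positivity : (2 : ℝ) * Real.sqrt (G p) ≠ 0)
    have hq2 := (hb2 p).div ((hsb p hp').const_mul 2)
      (by positivity : (2 : ℝ) * Real.sqrt (β p) ≠ 0)
    have hN := (hq1.mul (hsb p hp')).sub ((hsg p hp').mul hq2)
    have hDen := (hsb p hp').pow 2
    have hA'd := hN.div hDen (by positivity : Real.sqrt (β p) ^ 2 ≠ 0)
    have hM2 := (hA'd.mul hsinh).add (hAp.mul (hcosh.mul hfd))
    have hM2' := hM2.congr_of_eventuallyEq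
      (Filter.eventuallyEq_of_mem (hVo.mem_nhds hp') (fun x hx => (key x hx).deriv))
    have hd2 := hM2'.deriv
    have hd1 := (key p hp').deriv
    rw [hd2, hd1, hM p, Real.sqrt_div hgp.le]
    simp only [Pi.mul_apply, Pi.div_apply, Pi.sub_apply, Pi.add_apply, Pi.pow_apply]
    -- algebra
    set S := Real.sinh (∫ s in p₀..p, Real.sqrt z / (G s * Real.sqrt (β s))) with hS
    set C := Real.cosh (∫ s in p₀..p, Real.sqrt z / (G s * Real.sqrt (β s))) with hC
    set sz := Real.sqrt z with hsz
    set sb := Real.sqrt (β p) with hsbd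
    set sg := Real.sqrt (G p) with hsgd
    have hbe : β p = sb ^ 2 := (Real.sq_sqrt hbp.le).symm
    have hge : G p = sg ^ 2 := (Real.sq_sqrt hgp.le).symm
    have hze : z = sz ^ 2 := (Real.sq_sqrt hz.le).symm
    have hcon := hconstraint p hp
    rw [hbe, hge, hze] at hcon
    rw [hbe, hge]
    have hsb0 : sb ≠ 0 := hsbne
    have hsg0 : sg ≠ 0 := hsgne
    have hd2g : deriv (deriv G) p =
        (sb ^ 2 * (deriv G p) ^ 2 - deriv β p * sg ^ 2 * deriv G p
          + 2 * deriv (deriv β) p * sg ^ 4 + 4 * k ^ 2 * sg ^ 4 - 4 * sz ^ 2)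
          / (2 * sb ^ 2 * sg ^ 2) := by
      field_simp
      linear_combination hcon
    rw [hd2g]
    push_cast
    field_simp
    ring
  · rw [hM p₀]
    simp
end

section
/- Let β, G be positive C² functions on [p₀,0] satisfying 2βGG'' − β(G')² + β'GG' − 2β''G² − 4k²G² + 4z = 0 with z = 0. Then M(p) = √(G(p)/β(p))·∫_{p₀}^p ds/(G(s)√(β(s))) satisfies βM'' + (3/2)β'M' = k²M on [p₀,0] and M(p₀)=0. -/
set_option maxHeartbeats 2000000

noncomputable def gg (β G : ℝ → ℝ) : ℝ → ℝ := fun x => 1 / (G x * Real.sqrt (β x))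

noncomputable def II (p₀ : ℝ) (β G : ℝ → ℝ) : ℝ → ℝ := fun x => ∫ s in p₀..x, gg β G s

noncomputable def FF (β G : ℝ → ℝ) : ℝ → ℝ := fun x => Real.sqrt (G x) / Real.sqrt (β x)

noncomputable def FF1 (β G : ℝ → ℝ) : ℝ → ℝ := fun x =>
  (deriv G x / (2 * Real.sqrt (G x)) * Real.sqrt (β x)
    - Real.sqrt (G x) * (deriv β x / (2 * Real.sqrt (β x)))) / Real.sqrt (β x) ^ 2

noncomputable def MM1 (p₀ : ℝ) (β G : ℝ → ℝ) : ℝ → ℝ := fun x =>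
  FF1 β G x * II p₀ β G x + FF β G x * gg β G x

/-- For `z = 0`, the function `M(p) = √(G(p)/β(p))·∫_{p₀}^p ds/(G√β)`
solves `βM'' + (3/2)β'M' = k²M` on `[p₀,0]` with `M(p₀) = 0`. -/
theorem stmt_5 (p₀ k : ℝ) (hp₀ : p₀ < 0) (hk : 0 < k) (β G : ℝ → ℝ)
    (hβ : ContDiff ℝ 2 β) (hG : ContDiff ℝ 2 G)
    (hβpos : ∀ p ∈ Set.Icc p₀ 0, 0 < β p)
    (hGpos : ∀ p ∈ Set.Icc p₀ 0, 0 < G p)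
    (hconstraint : ∀ p ∈ Set.Icc p₀ 0,
      2 * β p * G p * deriv (deriv G) p - β p * (deriv G p) ^ 2
        + deriv β p * G p * deriv G p - 2 * deriv (deriv β) p * (G p) ^ 2
        - 4 * k ^ 2 * (G p) ^ 2 + 4 * (0 : ℝ) = 0)
    (M : ℝ → ℝ)
    (hM : ∀ p, M p = Real.sqrt (G p / β p) *
        ∫ s in p₀..p, 1 / (G s * Real.sqrt (β s))) :
    (∀ p ∈ Set.Icc p₀ 0,
        β p * deriv (deriv M) p + 3 / 2 * deriv β p * deriv M p = k ^ 2 * M p)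
      ∧ M p₀ = 0 := by
  refine ⟨?_, by rw [hM, intervalIntegral.integral_same, mul_zero]⟩
  -- an open set where β and G are positive
  have hUopen : IsOpen {x : ℝ | 0 < β x ∧ 0 < G x} :=
    (isOpen_lt continuous_const hβ.continuous).inter
      (isOpen_lt continuous_const hG.continuous)
  obtain ⟨δ, hδ, hth⟩ := (isCompact_Icc : IsCompact (Set.Icc p₀ 0)).exists_thickening_subset_open
    hUopen (fun x hx => ⟨hβpos x hx, hGpos x hx⟩)
  set V : Set ℝ := Set.Ioo (p₀ - δ) δ with hVdef
  have hVopen : IsOpen V := isOpen_Ioo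
  have hIccV : Set.Icc p₀ 0 ⊆ V := fun x hx =>
    ⟨by linarith [hx.1], by linarith [hx.2]⟩
  have hVU : ∀ x ∈ V, 0 < β x ∧ 0 < G x := by
    intro x hx
    apply hth
    rw [Metric.mem_thickening_iff]
    rcases le_or_gt x p₀ with h | h
    · exact ⟨p₀, Set.left_mem_Icc.2 hp₀.le, by rw [Real.dist_eq]; rw [abs_sub_lt_iff]; constructor <;> [linarith [hx.1]; linarith [hx.1]]⟩
    · rcases le_or_gt x 0 with h2 | h2
      · exact ⟨x, ⟨h.le, h2⟩, by simpa using hδ⟩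
      · exact ⟨0, Set.right_mem_Icc.2 hp₀.le, by rw [Real.dist_eq]; rw [abs_sub_lt_iff]; constructor <;> [simpa using hx.2; linarith [hx.2]]⟩
  -- smoothness facts
  have h2 : (2 : WithTop ℕ∞) = 1 + 1 := by norm_num
  have hβ1 : ContDiff ℝ 1 (deriv β) := by rw [h2] at hβ; exact (contDiff_succ_iff_deriv.mp hβ).2.2
  have hG1 : ContDiff ℝ 1 (deriv G) := by rw [h2] at hG; exact (contDiff_succ_iff_deriv.mp hG).2.2
  have hβd : ∀ q : ℝ, HasDerivAt β (deriv β q) q := fun q =>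
    ((hβ.differentiable (by norm_num)) q).hasDerivAt
  have hGd : ∀ q : ℝ, HasDerivAt G (deriv G q) q := fun q =>
    ((hG.differentiable (by norm_num)) q).hasDerivAt
  have hβdd : ∀ q : ℝ, HasDerivAt (deriv β) (deriv (deriv β) q) q := fun q =>
    ((hβ1.differentiable one_ne_zero) q).hasDerivAt
  have hGdd : ∀ q : ℝ, HasDerivAt (deriv G) (deriv (deriv G) q) q := fun q =>
    ((hG1.differentiable one_ne_zero) q).hasDerivAt
  -- positivity on V
  have hsapos : ∀ q ∈ V, 0 < Real.sqrt (β q) := fun q hq => Real.sqrt_pos.2 (hVU q hq).1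
  have hsbpos : ∀ q ∈ V, 0 < Real.sqrt (G q) := fun q hq => Real.sqrt_pos.2 (hVU q hq).2
  -- derivative of sqrt ∘ β, sqrt ∘ G
  have hsad : ∀ q ∈ V, HasDerivAt (fun x => Real.sqrt (β x))
      (deriv β q / (2 * Real.sqrt (β q))) q := fun q hq => (hβd q).sqrt (hVU q hq).1.ne'
  have hsbd : ∀ q ∈ V, HasDerivAt (fun x => Real.sqrt (G x))
      (deriv G q / (2 * Real.sqrt (G q))) q := fun q hq => (hGd q).sqrt (hVU q hq).2.ne'
  -- F has derivative F1 on V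
  have hFd : ∀ q ∈ V, HasDerivAt (FF β G) (FF1 β G q) q := fun q hq =>
    (hsbd q hq).div (hsad q hq) (hsapos q hq).ne'
  -- g continuous on V
  have hgc : ContinuousOn (gg β G) V := by
    apply ContinuousOn.div continuousOn_const
    · exact (hG.continuous.continuousOn).mul (hβ.continuous.continuousOn.sqrt)
    · intro q hq; exact (mul_pos (hVU q hq).2 (hsapos q hq)).ne'
  -- I has derivative g on V
  have hId : ∀ q ∈ V, HasDerivAt (II p₀ β G) (gg β G q) q := by
    intro q hq
    apply intervalIntegral.integral_hasDerivAt_right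
    · apply ContinuousOn.intervalIntegrable
      apply hgc.mono
      exact Set.OrdConnected.uIcc_subset Set.ordConnected_Ioo
        (hIccV ⟨le_refl p₀, hp₀.le⟩) hq
    · exact hgc.stronglyMeasurableAtFilter hVopen q hq
    · exact hgc.continuousAt (hVopen.mem_nhds hq)
  have hVmem : ∀ q ∈ V, V ∈ nhds q := fun q hq => hVopen.mem_nhds hq
  -- M = F * I on V
  have hMFI : ∀ q ∈ V, M q = FF β G q * II p₀ β G q := by
    intro q hq
    rw [hM q, Real.sqrt_div (hVU q hq).2.le]
    rfl
  -- derivative of g on V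
  have hgd : ∀ q ∈ V, HasDerivAt (gg β G)
      ((0 * (G q * Real.sqrt (β q)) - 1 * (deriv G q * Real.sqrt (β q)
        + G q * (deriv β q / (2 * Real.sqrt (β q))))) / (G q * Real.sqrt (β q)) ^ 2) q := by
    intro q hq
    exact (hasDerivAt_const q (1:ℝ)).div ((hGd q).mul (hsad q hq))
      (mul_pos (hVU q hq).2 (hsapos q hq)).ne'
  -- M has derivative M1 on V
  have hMd : ∀ q ∈ V, HasDerivAt M (MM1 p₀ β G q) q := by
    intro q hq
    exact HasDerivAt.congr_of_eventuallyEq ((hFd q hq).mul (hId q hq))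
      (by filter_upwards [hVmem q hq] with x hx using hMFI x hx)
  -- main computation
  intro p hp
  have hpV : p ∈ V := hIccV hp
  have hβp : 0 < β p := (hVU p hpV).1
  have hGp : 0 < G p := (hVU p hpV).2
  have hsap := hsapos p hpV
  have hsbp := hsbpos p hpV
  -- second derivative of M
  have hdM : deriv M =ᶠ[nhds p] MM1 p₀ β G := by
    filter_upwards [hVmem p hpV] with x hx using (hMd x hx).deriv
  -- derivative of F1 at p
  have hF1d : HasDerivAt (FF1 β G) _ p :=
    ((((hGdd p).div ((hsbd p hpV).const_mul 2) (by positivity)).mul (hsad p hpV)).sub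
      ((hsbd p hpV).mul ((hβdd p).div ((hsad p hpV).const_mul 2) (by positivity)))).div
      ((hsad p hpV).pow 2) (by positivity)
  have hM1d : HasDerivAt (MM1 p₀ β G) _ p :=
    (hF1d.mul (hId p hpV)).add ((hFd p hpV).mul (hgd p hpV))
  have hd2 : deriv (deriv M) p = _ := (hdM.deriv_eq).trans hM1d.deriv
  rw [hd2, (hMd p hpV).deriv, hMFI p hpV]
  unfold MM1 FF1 FF gg
  simp only [Pi.div_apply, Pi.mul_apply, Pi.sub_apply]
  set A := Real.sqrt (β p) with hA
  set B := Real.sqrt (G p) with hB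
  have hA2 : β p = A ^ 2 := by rw [hA, Real.sq_sqrt hβp.le]
  have hB2 : G p = B ^ 2 := by rw [hB, Real.sq_sqrt hGp.le]
  have hcon := hconstraint p hp
  rw [hA2, hB2] at hcon ⊢
  have hA0 : A ≠ 0 := ne_of_gt hsap
  have hB0 : B ≠ 0 := ne_of_gt hsbp
  linear_combination (norm := (field_simp; ring)) (II p₀ β G p / (4 * A * B ^ 3)) * hcon
end

section
/- Let β, G be positive C² functions on [p₀,0] satisfying 2βGG'' − β(G')² + β'GG' − 2β''G² − 4k²G² + 4z = 0 with z < 0, and assume ∫_{p₀}^0 √|z|/(G(s)√(β(s))) ds < π. Then M(p) = √(G(p)/β(p))·sin(∫_{p₀}^p √|z|/(G(s)√(β(s))) ds) satisfies βM'' + (3/2)β'M' = k²M on [p₀,0] and M(p₀)=0. -/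
open Real MeasureTheory Set Filter Topology

set_option maxHeartbeats 4000000 in
/-- For `z < 0` (with total phase less than `π`), the function
`M(p) = √(G(p)/β(p))·sin(∫_{p₀}^p √|z|/(G√β))`
solves `βM'' + (3/2)β'M' = k²M` on `[p₀,0]` with `M(p₀) = 0`. -/
theorem stmt_6 (p₀ k z : ℝ) (hp₀ : p₀ < 0) (hk : 0 < k) (hz : z < 0) (β G : ℝ → ℝ)
    (hβ : ContDiff ℝ 2 β) (hG : ContDiff ℝ 2 G)
    (hβpos : ∀ p ∈ Set.Icc p₀ 0, 0 < β p)
    (hGpos : ∀ p ∈ Set.Icc p₀ 0, 0 < G p)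
    (hconstraint : ∀ p ∈ Set.Icc p₀ 0,
      2 * β p * G p * deriv (deriv G) p - β p * (deriv G p) ^ 2
        + deriv β p * G p * deriv G p - 2 * deriv (deriv β) p * (G p) ^ 2
        - 4 * k ^ 2 * (G p) ^ 2 + 4 * z = 0)
    (hphase : (∫ s in p₀..(0:ℝ), Real.sqrt |z| / (G s * Real.sqrt (β s))) < Real.pi)
    (M : ℝ → ℝ)
    (hM : ∀ p, M p = Real.sqrt (G p / β p) *
        Real.sin (∫ s in p₀..p, Real.sqrt |z| / (G s * Real.sqrt (β s)))) :
    (∀ p ∈ Set.Icc p₀ 0,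
        β p * deriv (deriv M) p + 3 / 2 * deriv β p * deriv M p = k ^ 2 * M p)
      ∧ M p₀ = 0 := by
  have hβc : Continuous β := hβ.continuous
  have hGc : Continuous G := hG.continuous
  have hβd : Differentiable ℝ β := hβ.differentiable two_ne_zero
  have hGd : Differentiable ℝ G := hG.differentiable two_ne_zero
  have hβ'd : Differentiable ℝ (deriv β) :=
    ((contDiff_succ_iff_deriv.mp (show ContDiff ℝ (1+1) β by norm_num [hβ])).2.2).differentiable
      one_ne_zero
  have hG'd : Differentiable ℝ (deriv G) :=
    ((contDiff_succ_iff_deriv.mp (show ContDiff ℝ (1+1) G by norm_num [hG])).2.2).differentiable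
      one_ne_zero
  have hUopen : IsOpen {x : ℝ | 0 < β x ∧ 0 < G x} :=
    (isOpen_lt continuous_const hβc).inter (isOpen_lt continuous_const hGc)
  obtain ⟨ε₁, hε₁pos, hb₁⟩ := Metric.mem_nhds_iff.mp (hUopen.mem_nhds
    (show p₀ ∈ _ from ⟨hβpos p₀ ⟨le_rfl, hp₀.le⟩, hGpos p₀ ⟨le_rfl, hp₀.le⟩⟩))
  obtain ⟨ε₂, hε₂pos, hb₂⟩ := Metric.mem_nhds_iff.mp (hUopen.mem_nhds
    (show (0:ℝ) ∈ _ from ⟨hβpos 0 ⟨hp₀.le, le_rfl⟩, hGpos 0 ⟨hp₀.le, le_rfl⟩⟩))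
  set V : Set ℝ := Ioo (p₀ - ε₁) ε₂ with hVdef
  have hVopen : IsOpen V := isOpen_Ioo
  have hVpos : ∀ x ∈ V, 0 < β x ∧ 0 < G x := by
    rintro x ⟨hx1, hx2⟩
    rcases lt_or_ge x p₀ with h | h
    · exact hb₁ (by rw [Real.ball_eq_Ioo]; exact ⟨hx1, by linarith⟩)
    rcases le_or_gt x 0 with h0 | h0
    · exact ⟨hβpos x ⟨h, h0⟩, hGpos x ⟨h, h0⟩⟩
    · exact hb₂ (by rw [Real.ball_eq_Ioo]; constructor <;> simp <;> linarith)
  have hIccV : Icc p₀ 0 ⊆ V := fun x hx => ⟨by linarith [hx.1], lt_of_le_of_lt hx.2 hε₂pos⟩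
  have hp₀V : p₀ ∈ V := hIccV ⟨le_rfl, hp₀.le⟩
  have hFc : ∀ x ∈ V, ContinuousAt (fun s => Real.sqrt |z| / (G s * Real.sqrt (β s))) x := by
    intro x hx
    have h := hVpos x hx
    exact continuousAt_const.div
      ((hGc.continuousAt).mul ((Real.continuous_sqrt.comp hβc).continuousAt))
      (mul_pos h.2 (Real.sqrt_pos.mpr h.1)).ne'
  have hFmeas := ContinuousAt.stronglyMeasurableAtFilter (μ := volume) hVopen hFc
  have hFint : ∀ x ∈ V, IntervalIntegrable
      (fun s => Real.sqrt |z| / (G s * Real.sqrt (β s))) volume p₀ x := by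
    intro x hx
    apply ContinuousOn.intervalIntegrable
    intro y hy
    exact (hFc y (Set.ordConnected_Ioo.uIcc_subset hp₀V hx hy)).continuousWithinAt
  set Φ : ℝ → ℝ := fun u => ∫ s in p₀..u, Real.sqrt |z| / (G s * Real.sqrt (β s)) with hΦdef
  have hΦd : ∀ x ∈ V, HasDerivAt Φ (Real.sqrt |z| / (G x * Real.sqrt (β x))) x := fun x hx =>
    intervalIntegral.integral_hasDerivAt_right (hFint x hx) (hFmeas x hx) (hFc x hx)
  set E1 : ℝ → ℝ := fun x =>
    (deriv G x * β x - G x * deriv β x) / β x ^ 2 / (2 * Real.sqrt (G x / β x)) * Real.sin (Φ x)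
      + Real.sqrt (G x / β x) *
        (Real.cos (Φ x) * (Real.sqrt |z| / (G x * Real.sqrt (β x)))) with hE1def
  have hMd : ∀ x ∈ V, HasDerivAt M (E1 x) x := by
    intro x hx
    obtain ⟨hbx, hgx⟩ := hVpos x hx
    have hR : HasDerivAt (fun y => Real.sqrt (G y / β y))
        ((deriv G x * β x - G x * deriv β x) / β x ^ 2 / (2 * Real.sqrt (G x / β x))) x :=
      (((hGd x).hasDerivAt.div (hβd x).hasDerivAt hbx.ne')).sqrt (div_pos hgx hbx).ne'
    have hs : HasDerivAt (fun y => Real.sin (Φ y))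
        (Real.cos (Φ x) * (Real.sqrt |z| / (G x * Real.sqrt (β x)))) x := (hΦd x hx).sin
    exact (hR.mul hs).congr_of_eventuallyEq
      (Filter.Eventually.of_forall fun y => hM y)
  have hderivM : ∀ x ∈ V, deriv M x = E1 x := fun x hx => (hMd x hx).deriv
  have hMp₀ : M p₀ = 0 := by
    rw [hM p₀, intervalIntegral.integral_same, Real.sin_zero, mul_zero]
  refine ⟨?_, hMp₀⟩
  intro p hp
  have hpV := hIccV hp
  obtain ⟨hbp, hgp⟩ := hVpos p hpV
  have hev : deriv M =ᶠ[𝓝 p] E1 := by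
    filter_upwards [hVopen.mem_nhds hpV] with x hx using hderivM x hx
  rw [hev.deriv_eq, hderivM p hpV, hM p]
  -- second derivative of E1 at p
  have hb' := (hβd p).hasDerivAt
  have hg' := (hGd p).hasDerivAt
  have hb'' := (hβ'd p).hasDerivAt
  have hg'' := (hG'd p).hasDerivAt
  have hRp : HasDerivAt (fun y => Real.sqrt (G y / β y))
      ((deriv G p * β p - G p * deriv β p) / β p ^ 2 / (2 * Real.sqrt (G p / β p))) p :=
    (hg'.div hb' hbp.ne').sqrt (div_pos hgp hbp).ne'
  have hΦp := hΦd p hpV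
  have hsbp : HasDerivAt (fun y => Real.sqrt (β y)) (deriv β p / (2 * Real.sqrt (β p))) p :=
    hb'.sqrt hbp.ne'
  have hfp := (hasDerivAt_const p (Real.sqrt |z|)).div (hg'.mul hsbp)
    (mul_pos hgp (Real.sqrt_pos.mpr hbp)).ne'
  have hq := (hg''.mul hb').sub (hg'.mul hb'')
  have hA := (hq.div (hb'.pow 2) (pow_ne_zero 2 hbp.ne')).div (hRp.const_mul 2)
    (by positivity : (2 : ℝ) * Real.sqrt (G p / β p) ≠ 0)
  have hE2 := (hA.mul hΦp.sin).add (hRp.mul (hΦp.cos.mul hfp))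
  have hE2' := hE2.congr_of_eventuallyEq (f₁ := E1)
    (Filter.Eventually.of_forall fun y => rfl)
  rw [hE2'.deriv, hE1def]
  beta_reduce
  simp only [Pi.mul_apply, Pi.div_apply, Pi.sub_apply, Pi.pow_apply, Pi.add_apply]
  -- algebra
  have hg''eq : deriv (deriv G) p = (β p * (deriv G p)^2 - deriv β p * G p * deriv G p
      + 2 * deriv (deriv β) p * (G p)^2 + 4 * k^2 * (G p)^2 - 4*z) / (2 * β p * G p) := by
    have hcon := hconstraint p hp
    field_simp
    linarith
  rw [show (∫ s in p₀..p, Real.sqrt |z| / (G s * Real.sqrt (β s))) = Φ p from rfl]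
  rw [hg''eq]
  obtain ⟨R, hRdef⟩ : ∃ R, Real.sqrt (G p / β p) = R := ⟨_, rfl⟩
  obtain ⟨sb, hsbdef⟩ : ∃ sb, Real.sqrt (β p) = sb := ⟨_, rfl⟩
  obtain ⟨cz, hczdef⟩ : ∃ c, Real.sqrt |z| = c := ⟨_, rfl⟩
  obtain ⟨si, hsidef⟩ : ∃ s, Real.sin (Φ p) = s := ⟨_, rfl⟩
  obtain ⟨co, hcodef⟩ : ∃ c, Real.cos (Φ p) = c := ⟨_, rfl⟩
  have hsb2 : sb ^ 2 = β p := by rw [← hsbdef]; exact Real.sq_sqrt hbp.le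
  have hsbpos : 0 < sb := hsbdef ▸ Real.sqrt_pos.mpr hbp
  have hR2 : R ^ 2 = G p / β p := by rw [← hRdef]; exact Real.sq_sqrt (div_pos hgp hbp).le
  have hRpos : 0 < R := hRdef ▸ Real.sqrt_pos.mpr (div_pos hgp hbp)
  have hcz2 : cz ^ 2 = -z := by
    rw [← hczdef, Real.sq_sqrt (abs_nonneg z), abs_of_neg hz]
  have hGR : G p = R ^ 2 * β p := by rw [hR2]; field_simp
  rw [hRdef, hsbdef, hczdef, hsidef, hcodef, hGR, show β p = sb ^ 2 from hsb2.symm,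
    show z = -cz ^ 2 by linarith]
  have h2 : (0:ℝ) < 2 := by norm_num
  field_simp
  ring
end

section
/- (Polynomial vorticity) Let a > 0, n ∈ ℝ with n ∉ {2, −2, 2/3}, and c₁, c₂, z ∈ ℝ. Define G(p) = (1−ap)ⁿ and β(p) = 2c₁(1−ap)ⁿ + 2c₂(1−ap)^{1−n/2}/(a(3n−2)) + 4z(1−ap)^{2−2n}/(a²(3n−2)²) + 4k²(1−ap)²/(a²(n²−4)). Then for all p < 1/a, the identity 2βGG'' − β(G')² + β'GG' − 2β''G² − 4k²G² + 4z = 0 holds. -/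
set_option maxHeartbeats 2000000



private lemma aux_L1 (a c₁ n t u : ℝ) (htne : t ≠ 0) :
    2 * (2 * c₁ * u ^ 2) * u ^ 2 * (n * ((n - 1) * (u ^ 2 / t / t) * -a) * -a)
      - (2 * c₁ * u ^ 2) * (n * (u ^ 2 / t) * -a) ^ 2
      + (2 * c₁ * (n * (u ^ 2 / t) * -a)) * u ^ 2 * (n * (u ^ 2 / t) * -a)
      - 2 * (2 * c₁ * (n * ((n - 1) * (u ^ 2 / t / t) * -a) * -a)) * (u ^ 2) ^ 2 = 0 := by
  field_simp
  ring

private lemma aux_L2 (a c₂ n t u : ℝ) (htne : t ≠ 0) (hune : u ≠ 0) (hane : a ≠ 0)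
    (h3n : 3 * n - 2 ≠ 0) :
    2 * (2 * c₂ * (t / u) / (a * (3 * n - 2))) * u ^ 2 * (n * ((n - 1) * (u ^ 2 / t / t) * -a) * -a)
      - (2 * c₂ * (t / u) / (a * (3 * n - 2))) * (n * (u ^ 2 / t) * -a) ^ 2
      + (2 * c₂ * ((1 - n / 2) * (t / u / t) * -a) / (a * (3 * n - 2))) * u ^ 2 * (n * (u ^ 2 / t) * -a)
      - 2 * (2 * c₂ * ((1 - n / 2) * ((1 - n / 2 - 1) * (t / u / t / t) * -a) * -a) / (a * (3 * n - 2))) * (u ^ 2) ^ 2 = 0 := by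
  field_simp
  ring

private lemma aux_L3 (a z n t u : ℝ) (htne : t ≠ 0) (hune : u ≠ 0) (hane : a ≠ 0)
    (h3n : 3 * n - 2 ≠ 0) :
    2 * (4 * z * (t ^ 2 / u ^ 4) / (a ^ 2 * (3 * n - 2) ^ 2)) * u ^ 2 * (n * ((n - 1) * (u ^ 2 / t / t) * -a) * -a)
      - (4 * z * (t ^ 2 / u ^ 4) / (a ^ 2 * (3 * n - 2) ^ 2)) * (n * (u ^ 2 / t) * -a) ^ 2
      + (4 * z * ((2 - 2 * n) * (t ^ 2 / u ^ 4 / t) * -a) / (a ^ 2 * (3 * n - 2) ^ 2)) * u ^ 2 * (n * (u ^ 2 / t) * -a)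
      - 2 * (4 * z * ((2 - 2 * n) * ((2 - 2 * n - 1) * (t ^ 2 / u ^ 4 / t / t) * -a) * -a) / (a ^ 2 * (3 * n - 2) ^ 2)) * (u ^ 2) ^ 2 = -(4 * z) := by
  field_simp
  ring

private lemma aux_L4 (a k n t u : ℝ) (htne : t ≠ 0) (hane : a ≠ 0)
    (hn4 : n ^ 2 - 4 ≠ 0) :
    2 * (4 * k ^ 2 * t ^ 2 / (a ^ 2 * (n ^ 2 - 4))) * u ^ 2 * (n * ((n - 1) * (u ^ 2 / t / t) * -a) * -a)
      - (4 * k ^ 2 * t ^ 2 / (a ^ 2 * (n ^ 2 - 4))) * (n * (u ^ 2 / t) * -a) ^ 2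
      + (4 * k ^ 2 * (2 * (t ^ 2 / t) * -a) / (a ^ 2 * (n ^ 2 - 4))) * u ^ 2 * (n * (u ^ 2 / t) * -a)
      - 2 * (4 * k ^ 2 * (2 * ((2 - 1) * (t ^ 2 / t / t) * -a) * -a) / (a ^ 2 * (n ^ 2 - 4))) * (u ^ 2) ^ 2
      = 4 * k ^ 2 * (u ^ 2) ^ 2 := by
  field_simp
  ring

/-- Polynomial vorticity: with `G(p) = (1−ap)ⁿ` and the associated `β`,
the constraint `2βGG'' − β(G')² + β'GG' − 2β''G² − 4k²G² + 4z = 0` holds for `p < 1/a`. -/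
theorem stmt_7 (a k n c₁ c₂ z : ℝ) (ha : 0 < a) (hk : 0 < k)
    (hn1 : n ≠ 2) (hn2 : n ≠ -2) (hn3 : n ≠ 2 / 3)
    (G β : ℝ → ℝ)
    (hGdef : ∀ p, G p = (1 - a * p) ^ n)
    (hβdef : ∀ p, β p = 2 * c₁ * (1 - a * p) ^ n
        + 2 * c₂ * (1 - a * p) ^ (1 - n / 2) / (a * (3 * n - 2))
        + 4 * z * (1 - a * p) ^ (2 - 2 * n) / (a ^ 2 * (3 * n - 2) ^ 2)
        + 4 * k ^ 2 * (1 - a * p) ^ (2 : ℝ) / (a ^ 2 * (n ^ 2 - 4))) :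
    ∀ p : ℝ, p < 1 / a →
      2 * β p * G p * deriv (deriv G) p - β p * (deriv G p) ^ 2
        + deriv β p * G p * deriv G p - 2 * deriv (deriv β) p * (G p) ^ 2
        - 4 * k ^ 2 * (G p) ^ 2 + 4 * z = 0 := by
  intro p hp
  have hpos : ∀ q : ℝ, q < 1 / a → 0 < 1 - a * q := by
    intro q hq
    have : q * a < 1 := (lt_div_iff₀ ha).mp hq
    nlinarith
  have ht : 0 < 1 - a * p := hpos p hp
  -- basic derivative lemma
  have hd : ∀ (r : ℝ) (q : ℝ), q < 1 / a →
      HasDerivAt (fun x : ℝ => (1 - a * x) ^ r) (r * (1 - a * q) ^ (r - 1) * (-a)) q := by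
    intro r q hq
    have hl : HasDerivAt (fun x : ℝ => 1 - a * x) (-a) q := by
      simpa using ((hasDerivAt_id q).const_mul a).const_sub 1
    have h : HasDerivAt (fun x : ℝ => (1 - a * x) ^ r) (-a * r * (1 - a * q) ^ (r - 1)) q :=
      hl.rpow_const (Or.inl (ne_of_gt (hpos q hq)))
    convert h using 1
    ring
  have hGfun : G = fun q => (1 - a * q) ^ n := funext hGdef
  have hG' : ∀ q, q < 1 / a → deriv G q = n * (1 - a * q) ^ (n - 1) * (-a) := by
    intro q hq; rw [hGfun]; exact (hd n q hq).deriv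
  have hevG : deriv G =ᶠ[nhds p] (fun q => n * (1 - a * q) ^ (n - 1) * (-a)) :=
    Filter.eventually_of_mem (Iio_mem_nhds hp) (fun q hq => hG' q hq)
  have hG'' : deriv (deriv G) p = n * ((n - 1) * (1 - a * p) ^ (n - 1 - 1) * (-a)) * (-a) := by
    rw [hevG.deriv_eq]
    exact (((hd (n - 1) p hp).const_mul n).mul_const (-a)).deriv
  -- β derivatives
  have hβfun : β = fun q => 2 * c₁ * (1 - a * q) ^ n
        + 2 * c₂ * (1 - a * q) ^ (1 - n / 2) / (a * (3 * n - 2))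
        + 4 * z * (1 - a * q) ^ (2 - 2 * n) / (a ^ 2 * (3 * n - 2) ^ 2)
        + 4 * k ^ 2 * (1 - a * q) ^ (2 : ℝ) / (a ^ 2 * (n ^ 2 - 4)) := funext hβdef
  have hβD : ∀ q, q < 1 / a → HasDerivAt β
      (2 * c₁ * (n * (1 - a * q) ^ (n - 1) * (-a))
        + 2 * c₂ * ((1 - n / 2) * (1 - a * q) ^ (1 - n / 2 - 1) * (-a)) / (a * (3 * n - 2))
        + 4 * z * ((2 - 2 * n) * (1 - a * q) ^ (2 - 2 * n - 1) * (-a)) / (a ^ 2 * (3 * n - 2) ^ 2)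
        + 4 * k ^ 2 * ((2 : ℝ) * (1 - a * q) ^ ((2 : ℝ) - 1) * (-a)) / (a ^ 2 * (n ^ 2 - 4))) q := by
    intro q hq
    rw [hβfun]
    exact ((((hd n q hq).const_mul (2 * c₁)).add
      (((hd (1 - n / 2) q hq).const_mul (2 * c₂)).div_const (a * (3 * n - 2)))).add
      (((hd (2 - 2 * n) q hq).const_mul (4 * z)).div_const (a ^ 2 * (3 * n - 2) ^ 2))).add
      (((hd (2 : ℝ) q hq).const_mul (4 * k ^ 2)).div_const (a ^ 2 * (n ^ 2 - 4)))
  have hβ' : ∀ q, q < 1 / a → deriv β q =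
      2 * c₁ * (n * (1 - a * q) ^ (n - 1) * (-a))
        + 2 * c₂ * ((1 - n / 2) * (1 - a * q) ^ (1 - n / 2 - 1) * (-a)) / (a * (3 * n - 2))
        + 4 * z * ((2 - 2 * n) * (1 - a * q) ^ (2 - 2 * n - 1) * (-a)) / (a ^ 2 * (3 * n - 2) ^ 2)
        + 4 * k ^ 2 * ((2 : ℝ) * (1 - a * q) ^ ((2 : ℝ) - 1) * (-a)) / (a ^ 2 * (n ^ 2 - 4)) :=
    fun q hq => (hβD q hq).deriv
  have hevβ : deriv β =ᶠ[nhds p] (fun q =>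
      2 * c₁ * (n * (1 - a * q) ^ (n - 1) * (-a))
        + 2 * c₂ * ((1 - n / 2) * (1 - a * q) ^ (1 - n / 2 - 1) * (-a)) / (a * (3 * n - 2))
        + 4 * z * ((2 - 2 * n) * (1 - a * q) ^ (2 - 2 * n - 1) * (-a)) / (a ^ 2 * (3 * n - 2) ^ 2)
        + 4 * k ^ 2 * ((2 : ℝ) * (1 - a * q) ^ ((2 : ℝ) - 1) * (-a)) / (a ^ 2 * (n ^ 2 - 4))) :=
    Filter.eventually_of_mem (Iio_mem_nhds hp) (fun q hq => hβ' q hq)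
  have hβ'' : deriv (deriv β) p =
      2 * c₁ * (n * ((n - 1) * (1 - a * p) ^ (n - 1 - 1) * (-a)) * (-a))
        + 2 * c₂ * ((1 - n / 2) * ((1 - n / 2 - 1) * (1 - a * p) ^ (1 - n / 2 - 1 - 1) * (-a)) * (-a)) / (a * (3 * n - 2))
        + 4 * z * ((2 - 2 * n) * ((2 - 2 * n - 1) * (1 - a * p) ^ (2 - 2 * n - 1 - 1) * (-a)) * (-a)) / (a ^ 2 * (3 * n - 2) ^ 2)
        + 4 * k ^ 2 * ((2 : ℝ) * (((2 : ℝ) - 1) * (1 - a * p) ^ ((2 : ℝ) - 1 - 1) * (-a)) * (-a)) / (a ^ 2 * (n ^ 2 - 4)) := by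
    rw [hevβ.deriv_eq]
    exact (((((((hd (n - 1) p hp).const_mul n).mul_const (-a)).const_mul (2 * c₁)).add
      (((((hd (1 - n / 2 - 1) p hp).const_mul (1 - n / 2)).mul_const (-a)).const_mul (2 * c₂)).div_const (a * (3 * n - 2)))).add
      (((((hd (2 - 2 * n - 1) p hp).const_mul (2 - 2 * n)).mul_const (-a)).const_mul (4 * z)).div_const (a ^ 2 * (3 * n - 2) ^ 2))).add
      (((((hd ((2 : ℝ) - 1) p hp).const_mul (2 : ℝ)).mul_const (-a)).const_mul (4 * k ^ 2)).div_const (a ^ 2 * (n ^ 2 - 4)))).deriv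
  -- substitute
  rw [hGdef p, hβdef p, hG' p hp, hG'', hβ' p hp, hβ'']
  -- algebra
  have e1 : (1 - a * p) ^ n = ((1 - a * p) ^ (n / 2)) ^ (2 : ℕ) := by
    rw [← Real.rpow_natCast ((1 - a * p) ^ (n / 2)) 2, ← Real.rpow_mul ht.le]
    norm_num
  have e2 : (1 - a * p) ^ (2 * n) = ((1 - a * p) ^ (n / 2)) ^ (4 : ℕ) := by
    rw [← Real.rpow_natCast ((1 - a * p) ^ (n / 2)) 4, ← Real.rpow_mul ht.le]
    norm_num
    ring_nf
  have e3 : (1 - a * p) ^ (2 : ℝ) = (1 - a * p) ^ (2 : ℕ) := by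
    rw [← Real.rpow_natCast (1 - a * p) 2]
    norm_num
  simp only [Real.rpow_sub ht, Real.rpow_one, e1, e2, e3]
  have hu : (0:ℝ) < ((1 - a * p) ^ (n / 2)) := Real.rpow_pos_of_pos ht _
  set t := 1 - a * p with htdef
  set u := t ^ (n / 2) with hudef
  have htne : t ≠ 0 := ne_of_gt ht
  have hune : u ≠ 0 := ne_of_gt hu
  have hane : a ≠ 0 := ne_of_gt ha
  have h3n : 3 * n - 2 ≠ 0 := by intro h; exact hn3 (by linarith)
  have hn4 : n ^ 2 - 4 ≠ 0 := by
    intro h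
    rcases mul_eq_zero.mp (show (n - 2) * (n + 2) = 0 by nlinarith) with h' | h'
    · exact hn1 (by linarith)
    · exact hn2 (by linarith)
  have L1 := aux_L1 a c₁ n t u htne
  have L2 := aux_L2 a c₂ n t u htne hune hane h3n
  have L3 := aux_L3 a z n t u htne hune hane h3n
  have L4 := aux_L4 a k n t u htne hane hn4
  linear_combination L1 + L2 + L3 + L4
end

section
/- (Exponential vorticity #1) Let a ≠ 0 and c₁, c₂, z ∈ ℝ. Define G(p) = e^{ap} and β(p) = c₁e^{ap} + c₂e^{−ap/2} + 4k²/a² + 4z e^{−2ap}/(9a²). Then 2βGG'' − β(G')² + β'GG' − 2β''G² − 4k²G² + 4z = 0 for all p ∈ ℝ. -/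
lemma hda_cexp (c d : ℝ) (p : ℝ) :
    HasDerivAt (fun p : ℝ => c * Real.exp (d * p)) (c * d * Real.exp (d * p)) p := by
  have h := ((hasDerivAt_id p).const_mul d).exp
  have h2 := h.const_mul c
  simpa [mul_comm, mul_assoc, mul_left_comm] using h2

/-- Exponential vorticity #1: with `G(p) = e^{ap}` and the associated `β`,
the constraint `2βGG'' − β(G')² + β'GG' − 2β''G² − 4k²G² + 4z = 0` holds for all `p`. -/
theorem stmt_8 (a k c₁ c₂ z : ℝ) (ha : a ≠ 0) (hk : 0 < k)
    (G β : ℝ → ℝ)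
    (hGdef : ∀ p, G p = Real.exp (a * p))
    (hβdef : ∀ p, β p = c₁ * Real.exp (a * p) + c₂ * Real.exp (-a * p / 2)
        + 4 * k ^ 2 / a ^ 2 + 4 * z * Real.exp (-2 * a * p) / (9 * a ^ 2)) :
    ∀ p : ℝ,
      2 * β p * G p * deriv (deriv G) p - β p * (deriv G p) ^ 2
        + deriv β p * G p * deriv G p - 2 * deriv (deriv β) p * (G p) ^ 2
        - 4 * k ^ 2 * (G p) ^ 2 + 4 * z = 0 := by
  intro p
  have hG : G = fun p => 1 * Real.exp (a * p) := by funext q; rw [hGdef q]; ring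
  have hβ : β = fun p => c₁ * Real.exp (a * p) + c₂ * Real.exp ((-a/2) * p)
      + 4 * k ^ 2 / a ^ 2 + (4 * z / (9 * a ^ 2)) * Real.exp ((-2*a) * p) := by
    funext q; rw [hβdef q]; ring_nf
  have hG1 : deriv G = fun p => (1*a) * Real.exp (a * p) := by
    funext q; rw [hG]; exact (hda_cexp 1 a q).deriv
  have hG2 : deriv (deriv G) p = (1*a*a) * Real.exp (a * p) := by
    rw [hG1]; exact (hda_cexp (1*a) a p).deriv
  have hβ1 : deriv β = fun p => (c₁*a) * Real.exp (a * p) + (c₂*(-a/2)) * Real.exp ((-a/2) * p)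
      + (4 * z / (9 * a ^ 2) * (-2*a)) * Real.exp ((-2*a) * p) := by
    funext q; rw [hβ]
    have h := (((hda_cexp c₁ a q).add (hda_cexp c₂ (-a/2) q)).add
      (hasDerivAt_const q (4 * k ^ 2 / a ^ 2))).add (hda_cexp (4 * z / (9 * a ^ 2)) (-2*a) q)
    simpa [Pi.add_def] using h.deriv
  have hβ2 : deriv (deriv β) p = (c₁*a*a) * Real.exp (a * p)
      + (c₂*(-a/2)*(-a/2)) * Real.exp ((-a/2) * p)
      + (4 * z / (9 * a ^ 2) * (-2*a) * (-2*a)) * Real.exp ((-2*a) * p) := by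
    rw [hβ1]
    have h := ((hda_cexp (c₁*a) a p).add (hda_cexp (c₂*(-a/2)) (-a/2) p)).add
      (hda_cexp (4 * z / (9 * a ^ 2) * (-2*a)) (-2*a) p)
    simpa [Pi.add_def] using h.deriv
  rw [hβ2, hG2, hβ1, hG1, hβ, hG]
  simp only []
  set u := Real.exp (-a/2 * p) with hu
  have hu0 : u ≠ 0 := Real.exp_ne_zero _
  have e1 : Real.exp (a*p) = (u^2)⁻¹ := by
    rw [hu, ← Real.exp_nat_mul, ← Real.exp_neg]
    norm_num; ring_nf
  have e2 : Real.exp (-2*a*p) = u^4 := by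
    rw [hu, ← Real.exp_nat_mul]
    norm_num; ring_nf
  rw [e1, e2]
  field_simp
  ring
end

section
/- (Quadratic vorticity) Let a ≠ 0 and λ, k ∈ ℝ with k > 0. Define G(p) = (50a³p³)/3 − 20a²k²p² + 16ak⁴p + (25a²λ − 16k⁶) and β(p) = λ + 2ap³/3. Then 2βGG'' − β(G')² + β'GG' − 2β''G² − 4k²G² + 4z = 0 holds with z = k²(1125a⁴λ² − 1056a²k⁶λ + 256k¹²). -/
lemma cubic_hasDerivAt (c3 c2 c1 c0 p : ℝ) :
    HasDerivAt (fun x : ℝ => c3 * x ^ 3 + c2 * x ^ 2 + c1 * x + c0)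
      (3 * c3 * p ^ 2 + 2 * c2 * p + c1) p := by
  have h3 := (hasDerivAt_pow 3 p).const_mul c3
  have h2 := (hasDerivAt_pow 2 p).const_mul c2
  have h1 := (hasDerivAt_id p).const_mul c1
  have h := ((h3.add h2).add h1).add_const c0
  exact h.congr_deriv (by norm_num; ring)

lemma cubic_deriv (c3 c2 c1 c0 : ℝ) :
    deriv (fun x : ℝ => c3 * x ^ 3 + c2 * x ^ 2 + c1 * x + c0)
      = fun p => 3 * c3 * p ^ 2 + 2 * c2 * p + c1 := by
  funext p; exact (cubic_hasDerivAt c3 c2 c1 c0 p).deriv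

lemma quad_deriv (c2 c1 c0 : ℝ) :
    deriv (fun x : ℝ => c2 * x ^ 2 + c1 * x + c0)
      = fun p => 2 * c2 * p + c1 := by
  funext p
  have h := (cubic_hasDerivAt 0 c2 c1 c0 p)
  simp only [zero_mul, mul_zero, zero_add, mul_assoc] at h ⊢
  simpa using h.deriv

/-- Quadratic vorticity: with the cubic `G` and `β(p) = λ + 2ap³/3`, the constraint holds
with `z = k²(1125a⁴λ² − 1056a²k⁶λ + 256k¹²)`. -/
theorem stmt_10 (a lam k : ℝ) (ha : a ≠ 0) (hk : 0 < k)
    (G β : ℝ → ℝ)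
    (hGdef : ∀ p, G p = 50 * a ^ 3 * p ^ 3 / 3 - 20 * a ^ 2 * k ^ 2 * p ^ 2
        + 16 * a * k ^ 4 * p + (25 * a ^ 2 * lam - 16 * k ^ 6))
    (hβdef : ∀ p, β p = lam + 2 * a * p ^ 3 / 3) :
    ∀ p : ℝ,
      2 * β p * G p * deriv (deriv G) p - β p * (deriv G p) ^ 2
        + deriv β p * G p * deriv G p - 2 * deriv (deriv β) p * (G p) ^ 2
        - 4 * k ^ 2 * (G p) ^ 2
        + 4 * (k ^ 2 * (1125 * a ^ 4 * lam ^ 2 - 1056 * a ^ 2 * k ^ 6 * lam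
            + 256 * k ^ 12)) = 0 := by
  have hG : G = fun x : ℝ => (50 * a ^ 3 / 3) * x ^ 3 + (-(20 * a ^ 2 * k ^ 2)) * x ^ 2
      + (16 * a * k ^ 4) * x + (25 * a ^ 2 * lam - 16 * k ^ 6) := by
    funext p; rw [hGdef p]; ring
  have hβ : β = fun x : ℝ => (2 * a / 3) * x ^ 3 + 0 * x ^ 2 + 0 * x + lam := by
    funext p; rw [hβdef p]; ring
  have hG1 : deriv G = fun p : ℝ => 2 * (3 * (50 * a ^ 3 / 3) / 2) * p ^ 2
      + 2 * (-(20 * a ^ 2 * k ^ 2)) * p + 16 * a * k ^ 4 := by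
    rw [hG, cubic_deriv]; funext p; ring
  have hG2 : deriv (deriv G) = fun p : ℝ => 2 * (3 * (50 * a ^ 3 / 3) / 2) * (2 * p)
      + 2 * (-(20 * a ^ 2 * k ^ 2)) := by
    rw [hG1, quad_deriv]; funext p; ring
  have hβ1 : deriv β = fun p : ℝ => 2 * (3 * (2 * a / 3) / 2) * p ^ 2 + 2 * 0 * p + 0 := by
    rw [hβ, cubic_deriv]; funext p; ring
  have hβ2 : deriv (deriv β) = fun p : ℝ => 2 * (3 * (2 * a / 3) / 2) * (2 * p) + 2 * 0 := by
    rw [hβ1, quad_deriv]; funext p; ring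
  intro p
  rw [hGdef p, hβdef p, hG2, hG1, hβ2, hβ1]; simp only []
  ring
end

section
/- (Trigonometric vorticity) Let a₁, a₂ ∈ ℝ, b > 0, λ, k ∈ ℝ with k > 0. Define β(p) = λ + 2a₁sin(bp)/b + 2a₂(cos(bp) − 1)/b and G(p) = β(p) + 4k²/b². Then 2βGG'' − β(G')² + β'GG' − 2β''G² − 4k²G² + 4z = 0 holds with z = (k²/b⁴)·[(4k² + λb²)² − 4a₂b(4k² + λb²) − 4a₁²b²]. -/
/-- Trigonometric vorticity: with the trigonometric `β` and `G = β + 4k²/b²`,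
the constraint holds with `z = (k²/b⁴)[(4k² + λb²)² − 4a₂b(4k² + λb²) − 4a₁²b²]`. -/
theorem stmt_14 (a₁ a₂ b lam k : ℝ) (hb : 0 < b) (hk : 0 < k)
    (G β : ℝ → ℝ)
    (hβdef : ∀ p, β p = lam + 2 * a₁ * Real.sin (b * p) / b
        + 2 * a₂ * (Real.cos (b * p) - 1) / b)
    (hGdef : ∀ p, G p = β p + 4 * k ^ 2 / b ^ 2) :
    ∀ p : ℝ,
      2 * β p * G p * deriv (deriv G) p - β p * (deriv G p) ^ 2
        + deriv β p * G p * deriv G p - 2 * deriv (deriv β) p * (G p) ^ 2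
        - 4 * k ^ 2 * (G p) ^ 2
        + 4 * (k ^ 2 / b ^ 4 * ((4 * k ^ 2 + lam * b ^ 2) ^ 2
            - 4 * a₂ * b * (4 * k ^ 2 + lam * b ^ 2) - 4 * a₁ ^ 2 * b ^ 2)) = 0 := by
  have hb0 : b ≠ 0 := ne_of_gt hb
  -- derivative of b*p
  have hbp : ∀ p : ℝ, HasDerivAt (fun x : ℝ => b * x) b p := by
    intro p
    simpa using (hasDerivAt_id p).const_mul b
  have hβ' : ∀ p, HasDerivAt β (2 * a₁ * Real.cos (b * p) - 2 * a₂ * Real.sin (b * p)) p := by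
    intro p
    have hs : HasDerivAt (fun x : ℝ => Real.sin (b * x)) (Real.cos (b * p) * b) p :=
      (Real.hasDerivAt_sin (b * p)).comp p (hbp p)
    have hc : HasDerivAt (fun x : ℝ => Real.cos (b * x)) (-Real.sin (b * p) * b) p :=
      (Real.hasDerivAt_cos (b * p)).comp p (hbp p)
    have h : HasDerivAt (fun x : ℝ => lam + 2 * a₁ * Real.sin (b * x) / b
        + 2 * a₂ * (Real.cos (b * x) - 1) / b)
        (2 * a₁ * (Real.cos (b * p) * b) / b + 2 * a₂ * (-Real.sin (b * p) * b) / b) p := by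
      exact (((hs.const_mul (2 * a₁)).div_const b).const_add lam).add
        ((((hc.sub_const 1).const_mul (2 * a₂))).div_const b)
    have h2 := h.congr_of_eventuallyEq (Filter.Eventually.of_forall fun x => (hβdef x))
    refine h2.congr_deriv ?_
    linear_combination (2 * a₁ * Real.cos (b * p) - 2 * a₂ * Real.sin (b * p)) * mul_inv_cancel₀ hb0
  have hβ'' : ∀ p, HasDerivAt (deriv β)
      (-(2 * a₁ * b * Real.sin (b * p)) - 2 * a₂ * b * Real.cos (b * p)) p := by
    intro p
    have hd : deriv β = fun p => 2 * a₁ * Real.cos (b * p) - 2 * a₂ * Real.sin (b * p) :=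
      funext fun p => (hβ' p).deriv
    rw [hd]
    have hs : HasDerivAt (fun x : ℝ => Real.sin (b * x)) (Real.cos (b * p) * b) p :=
      (Real.hasDerivAt_sin (b * p)).comp p (hbp p)
    have hc : HasDerivAt (fun x : ℝ => Real.cos (b * x)) (-Real.sin (b * p) * b) p :=
      (Real.hasDerivAt_cos (b * p)).comp p (hbp p)
    have h : HasDerivAt (fun x : ℝ => 2 * a₁ * Real.cos (b * x) - 2 * a₂ * Real.sin (b * x))
        (2 * a₁ * (-Real.sin (b * p) * b) - 2 * a₂ * (Real.cos (b * p) * b)) p :=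
      (hc.const_mul (2 * a₁)).sub (hs.const_mul (2 * a₂))
    convert h using 1
    ring
  have hG' : ∀ p, HasDerivAt G (2 * a₁ * Real.cos (b * p) - 2 * a₂ * Real.sin (b * p)) p := by
    intro p
    have h := (hβ' p).add_const (4 * k ^ 2 / b ^ 2)
    exact h.congr_of_eventuallyEq (Filter.Eventually.of_forall fun x => (hGdef x))
  have hG'' : ∀ p, HasDerivAt (deriv G)
      (-(2 * a₁ * b * Real.sin (b * p)) - 2 * a₂ * b * Real.cos (b * p)) p := by
    intro p
    have hd : deriv G = fun p => 2 * a₁ * Real.cos (b * p) - 2 * a₂ * Real.sin (b * p) :=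
      funext fun p => (hG' p).deriv
    have hd2 : deriv β = fun p => 2 * a₁ * Real.cos (b * p) - 2 * a₂ * Real.sin (b * p) :=
      funext fun p => (hβ' p).deriv
    rw [hd, ← hd2]
    exact hβ'' p
  intro p
  rw [hGdef p, hβdef p, (hG' p).deriv, (hβ' p).deriv, (hG'' p).deriv, (hβ'' p).deriv]
  have hpy : Real.sin (b * p) ^ 2 = 1 - Real.cos (b * p) ^ 2 := by
    have := Real.sin_sq_add_cos_sq (b * p); linarith
  field_simp
  ring_nf
  rw [show Real.sin (b*p)^2 = 1 - Real.cos (b*p)^2 from hpy]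
  ring
end

section
/- (Hyperbolic vorticity) Let a₁, a₂ ∈ ℝ, b > 0, λ, k ∈ ℝ with k > 0. Define β(p) = λ + 2a₁sinh(bp)/b + 2a₂(1 − cosh(bp))/b and G(p) = β(p) − 4k²/b². Then 2βGG'' − β(G')² + β'GG' − 2β''G² − 4k²G² + 4z = 0 holds with z = (k²/b⁴)·[(4k² − λb²)² − 4a₂b(4k² − λb²) + 4a₁²b²]. -/
/-- Hyperbolic vorticity: with the hyperbolic `β` and `G = β − 4k²/b²`,
the constraint holds with `z = (k²/b⁴)[(4k² − λb²)² − 4a₂b(4k² − λb²) + 4a₁²b²]`. -/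
theorem stmt_16 (a₁ a₂ b lam k : ℝ) (hb : 0 < b) (hk : 0 < k)
    (G β : ℝ → ℝ)
    (hβdef : ∀ p, β p = lam + 2 * a₁ * Real.sinh (b * p) / b
        + 2 * a₂ * (1 - Real.cosh (b * p)) / b)
    (hGdef : ∀ p, G p = β p - 4 * k ^ 2 / b ^ 2) :
    ∀ p : ℝ,
      2 * β p * G p * deriv (deriv G) p - β p * (deriv G p) ^ 2
        + deriv β p * G p * deriv G p - 2 * deriv (deriv β) p * (G p) ^ 2
        - 4 * k ^ 2 * (G p) ^ 2
        + 4 * (k ^ 2 / b ^ 4 * ((4 * k ^ 2 - lam * b ^ 2) ^ 2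
            - 4 * a₂ * b * (4 * k ^ 2 - lam * b ^ 2) + 4 * a₁ ^ 2 * b ^ 2)) = 0 := by
  have hb0 : b ≠ 0 := ne_of_gt hb
  have hβfun : β = fun p => lam + 2 * a₁ * Real.sinh (b * p) / b
      + 2 * a₂ * (1 - Real.cosh (b * p)) / b := funext hβdef
  have hGfun : G = fun p => β p - 4 * k ^ 2 / b ^ 2 := funext hGdef
  have hbp : ∀ p : ℝ, HasDerivAt (fun p : ℝ => b * p) b p := by
    intro p
    simpa using (hasDerivAt_id p).const_mul b
  have hβd : ∀ p : ℝ, HasDerivAt β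
      (2 * a₁ * Real.cosh (b * p) - 2 * a₂ * Real.sinh (b * p)) p := by
    intro p
    rw [hβfun]
    have h1 : HasDerivAt (fun p : ℝ => Real.sinh (b * p)) (Real.cosh (b * p) * b) p :=
      (Real.hasDerivAt_sinh (b * p)).comp p (hbp p)
    have h2 : HasDerivAt (fun p : ℝ => Real.cosh (b * p)) (Real.sinh (b * p) * b) p :=
      (Real.hasDerivAt_cosh (b * p)).comp p (hbp p)
    have := ((((h1.const_mul (2 * a₁)).div_const b).const_add lam).add
      (((h2.const_sub 1).const_mul (2 * a₂)).div_const b))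
    refine this.congr_deriv ?_
    field_simp
    ring
  have hβ' : deriv β = fun p => 2 * a₁ * Real.cosh (b * p) - 2 * a₂ * Real.sinh (b * p) :=
    funext fun p => (hβd p).deriv
  have hβd2 : ∀ p : ℝ, HasDerivAt (deriv β)
      (2 * a₁ * b * Real.sinh (b * p) - 2 * a₂ * b * Real.cosh (b * p)) p := by
    intro p
    rw [hβ']
    have h1 : HasDerivAt (fun p : ℝ => Real.sinh (b * p)) (Real.cosh (b * p) * b) p :=
      (Real.hasDerivAt_sinh (b * p)).comp p (hbp p)
    have h2 : HasDerivAt (fun p : ℝ => Real.cosh (b * p)) (Real.sinh (b * p) * b) p :=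
      (Real.hasDerivAt_cosh (b * p)).comp p (hbp p)
    have := (h2.const_mul (2 * a₁)).sub (h1.const_mul (2 * a₂))
    refine this.congr_deriv ?_
    ring
  have hβ'' : deriv (deriv β) = fun p =>
      2 * a₁ * b * Real.sinh (b * p) - 2 * a₂ * b * Real.cosh (b * p) :=
    funext fun p => (hβd2 p).deriv
  have hGd : ∀ p : ℝ, HasDerivAt G
      (2 * a₁ * Real.cosh (b * p) - 2 * a₂ * Real.sinh (b * p)) p := by
    intro p
    rw [hGfun]
    exact (hβd p).sub_const _
  have hG' : deriv G = fun p => 2 * a₁ * Real.cosh (b * p) - 2 * a₂ * Real.sinh (b * p) :=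
    funext fun p => (hGd p).deriv
  have hG'' : deriv (deriv G) = fun p =>
      2 * a₁ * b * Real.sinh (b * p) - 2 * a₂ * b * Real.cosh (b * p) := by
    rw [hG', ← hβ', hβ'']
  intro p
  rw [hGdef p, hβdef p, hβ'', hβ', hG'', hG']
  simp only
  have hcs := Real.cosh_sq_sub_sinh_sq (b * p)
  set s := Real.sinh (b * p)
  set c := Real.cosh (b * p)
  field_simp
  linear_combination (16 * k ^ 2 * (a₂ ^ 2 - a₁ ^ 2) * b ^ 2) * hcs
end
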